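/- arXiv:2512.19303 — 5 statements merged into one kernel-verified Lean document; each statement's English description precedes it below -/
import Mathlib

section
/- Let n ≥ 1 and let g = [[A, b], [cᵀ, d]] be an invertible real (n+1)×(n+1) matrix, where A is an n×n real matrix, b, c ∈ ℝⁿ and d ∈ ℝ. For every x ∈ ℝⁿ with cᵀx + d ≠ 0, the homography h_g is differentiable at x, its Jacobian (total derivative) at x is the linear map given by the matrix h'_g(x) = (cᵀx + d)⁻² ((cᵀx + d)A − (Ax + b)cᵀ), and this matrix is invertible. -/
open Matrix

/-- The homography `h_g(x) = (Ax + b)/(cᵀx + d)` associated to the block matrix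
`g = [[A, b], [cᵀ, d]]`. -/
noncomputable def homog {n : ℕ} (A : Matrix (Fin n) (Fin n) ℝ) (b c : Fin n → ℝ) (d : ℝ)
    (x : Fin n → ℝ) : Fin n → ℝ :=
  (c ⬝ᵥ x + d)⁻¹ • (A.mulVec x + b)

/-- The Jacobian matrix `h'_g(x) = (cᵀx + d)⁻² ((cᵀx + d)A − (Ax + b)cᵀ)`. -/
noncomputable def homogJac {n : ℕ} (A : Matrix (Fin n) (Fin n) ℝ) (b c : Fin n → ℝ) (d : ℝ)
    (x : Fin n → ℝ) : Matrix (Fin n) (Fin n) ℝ :=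
  ((c ⬝ᵥ x + d) ^ 2)⁻¹ • ((c ⬝ᵥ x + d) • A - vecMulVec (A.mulVec x + b) c)

/-- The block matrix `[[A, b], [cᵀ, d]]` of size `(n+1) × (n+1)`. -/
def blockMat {n : ℕ} (A : Matrix (Fin n) (Fin n) ℝ) (b c : Fin n → ℝ) (d : ℝ) :
    Matrix (Fin n ⊕ Unit) (Fin n ⊕ Unit) ℝ :=
  Matrix.fromBlocks A (fun i _ => b i) (fun _ j => c j) (fun _ _ => d)

/-- `(v cᵀ) y = (c ⬝ y) v`. -/
lemma vecMulVec_mulVec' {n : ℕ} (v c y : Fin n → ℝ) :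
    (vecMulVec v c).mulVec y = (c ⬝ᵥ y) • v := by
  funext i
  simp only [mulVec, vecMulVec_apply, dotProduct, Pi.smul_apply, smul_eq_mul, Finset.sum_mul]
  exact Finset.sum_congr rfl fun j _ => by ring

/-- Differentiability part. -/
lemma homog_hasFDerivAt {n : ℕ}
    (A : Matrix (Fin n) (Fin n) ℝ) (b c : Fin n → ℝ) (d : ℝ)
    (x : Fin n → ℝ) (hx : c ⬝ᵥ x + d ≠ 0) :
    HasFDerivAt (homog A b c d)
      (LinearMap.toContinuousLinearMap (Matrix.toLin' (homogJac A b c d x))) x := by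
  set s := c ⬝ᵥ x + d with hs
  set v := A.mulVec x + b with hv
  set Lc : (Fin n → ℝ) →L[ℝ] ℝ :=
    LinearMap.toContinuousLinearMap
      { toFun := fun y => c ⬝ᵥ y
        map_add' := fun y z => dotProduct_add c y z
        map_smul' := fun r y => by simp [dotProduct_smul] } with hLc
  set LA : (Fin n → ℝ) →L[ℝ] (Fin n → ℝ) :=
    LinearMap.toContinuousLinearMap (Matrix.mulVecLin A) with hLA
  have hf : HasFDerivAt (fun y => c ⬝ᵥ y + d) Lc x := (Lc.hasFDerivAt).add_const d
  have hA : HasFDerivAt (fun y => A.mulVec y + b) LA x := (LA.hasFDerivAt).add_const b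
  have hinv : HasFDerivAt (fun y => (c ⬝ᵥ y + d)⁻¹) ((-(s ^ 2)⁻¹) • Lc) x := by
    have h := (hasFDerivAt_inv (x := s) hx).comp x hf
    exact h.congr_fderiv (by ext y; simp [mul_comm])
  have hsm := hinv.smul hA
  have key : HasFDerivAt (homog A b c d)
      (s⁻¹ • LA + ((-(s ^ 2)⁻¹) • Lc).smulRight v) x := hsm
  convert key using 1
  refine ContinuousLinearMap.ext fun y => ?_
  show (homogJac A b c d x).mulVec y = _
  have h1 : (homogJac A b c d x).mulVec y
      = (s ^ 2)⁻¹ • (s • (A.mulVec y) - (c ⬝ᵥ y) • v) := by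
    rw [homogJac, smul_mulVec, sub_mulVec, smul_mulVec, vecMulVec_mulVec']
  rw [h1]
  have h2 : (s⁻¹ • LA + ((-(s ^ 2)⁻¹) • Lc).smulRight v) y
      = s⁻¹ • (A.mulVec y) + (-(s ^ 2)⁻¹ * (c ⬝ᵥ y)) • v := by
    simp [hLA, hLc, Matrix.mulVecLin_apply, smul_smul]
  rw [h2, smul_sub, smul_smul, smul_smul]
  have h3 : (s ^ 2)⁻¹ * s = s⁻¹ := by
    rw [sq]; field_simp
  rw [h3, sub_eq_add_neg, ← neg_smul]
  ring_nf

/-- Determinant part. -/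
lemma homogJac_core_det_ne_zero {n : ℕ}
    (A : Matrix (Fin n) (Fin n) ℝ) (b c : Fin n → ℝ) (d : ℝ)
    (hg : (blockMat A b c d).det ≠ 0)
    (x : Fin n → ℝ) (hx : c ⬝ᵥ x + d ≠ 0) :
    ((c ⬝ᵥ x + d) • A - vecMulVec (A.mulVec x + b) c).det ≠ 0 := by
  set s := c ⬝ᵥ x + d with hs
  set v := A.mulVec x + b with hv
  have key : (Matrix.fromBlocks (s • (1 : Matrix (Fin n) (Fin n) ℝ)) (Matrix.of fun i (_ : Unit) => -v i)
        (0 : Matrix Unit (Fin n) ℝ) (Matrix.of fun _ _ => (1:ℝ))) *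
      ((blockMat A b c d) *
      (Matrix.fromBlocks (1 : Matrix (Fin n) (Fin n) ℝ) (Matrix.of fun i (_ : Unit) => x i)
        (0 : Matrix Unit (Fin n) ℝ) (Matrix.of fun _ _ => (1:ℝ)))) =
      Matrix.fromBlocks (s • A - vecMulVec v c) 0 (Matrix.of fun _ j => c j) (Matrix.of fun _ _ => s) := by
    rw [show blockMat A b c d = fromBlocks A (Matrix.of fun i _ => b i) (Matrix.of fun _ j => c j)
      (Matrix.of fun _ _ => d) from rfl, fromBlocks_multiply, fromBlocks_multiply]
    ext i j
    rcases i with i | i <;> rcases j with j | j <;>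
      simp [Matrix.mul_apply, vecMulVec_apply, hv, hs, mulVec, dotProduct,
        Finset.mul_sum, Finset.sum_sub_distrib, add_mul, sub_mul, mul_comm, mul_left_comm] <;>
      ring
  have hdet := congrArg Matrix.det key
  rw [det_mul, det_mul, det_fromBlocks_zero₂₁, det_fromBlocks_zero₂₁, det_fromBlocks_zero₁₂] at hdet
  simp [det_smul, det_one, det_unique] at hdet
  intro h
  rw [h] at hdet
  simp at hdet
  rcases hdet with ⟨h1, _⟩ | h2
  · exact hx h1
  · exact hg h2

/-- **Proposition 3.1.** If `g = [[A, b], [cᵀ, d]]` is invertible and `cᵀx + d ≠ 0`, then the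
homography `h_g` is differentiable at `x`, its total derivative at `x` is given by the matrix
`h'_g(x) = (cᵀx + d)⁻² ((cᵀx + d)A − (Ax + b)cᵀ)`, and this matrix is invertible. -/
theorem homography_hasFDerivAt_and_jacobian_isUnit {n : ℕ} (hn : 1 ≤ n)
    (A : Matrix (Fin n) (Fin n) ℝ) (b c : Fin n → ℝ) (d : ℝ)
    (hg : (blockMat A b c d).det ≠ 0)
    (x : Fin n → ℝ) (hx : c ⬝ᵥ x + d ≠ 0) :
    HasFDerivAt (homog A b c d)
      (LinearMap.toContinuousLinearMap (Matrix.toLin' (homogJac A b c d x))) x ∧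
    IsUnit (homogJac A b c d x) := by
  refine ⟨homog_hasFDerivAt A b c d x hx, ?_⟩
  rw [Matrix.isUnit_iff_isUnit_det, isUnit_iff_ne_zero]
  rw [homogJac, det_smul]
  refine mul_ne_zero ?_ (homogJac_core_det_ne_zero A b c d hg x hx)
  exact pow_ne_zero _ (inv_ne_zero (pow_ne_zero _ hx))
end

section
/- (Proposition 3.4, part 1.) Let n ≥ 1, let M ⊆ ℝⁿ be open, let V : M → Sym(n, ℝ) be a continuously differentiable map into the invertible real symmetric n×n matrices, and suppose there exists a twice continuously differentiable map ψ : M → ℝⁿ whose Jacobian matrix satisfies Dψ(m) = V(m)⁻¹ for all m ∈ M. Then for every m ∈ M and all Δ, Δ₁ ∈ ℝⁿ: (D_{V(m)Δ}V)(m)·Δ₁ = (D_{V(m)Δ₁}V)(m)·Δ, where D_u V(m) denotes the directional derivative of V at m in the direction u ∈ ℝⁿ (a symmetric n×n matrix). -/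
set_option synthInstance.maxHeartbeats 1000000
set_option maxHeartbeats 1000000

open Matrix

attribute [local instance] Matrix.normedAddCommGroup Matrix.normedSpace

/-- The continuous linear map associated to a square matrix. -/
noncomputable def matCLM {n : ℕ} (M : Matrix (Fin n) (Fin n) ℝ) :
    (Fin n → ℝ) →L[ℝ] (Fin n → ℝ) :=
  LinearMap.toContinuousLinearMap (Matrix.toLin' M)

lemma matCLM_apply {n : ℕ} (A : Matrix (Fin n) (Fin n) ℝ) (v : Fin n → ℝ) :
    matCLM A v = A.mulVec v := Matrix.toLin'_apply A v

/-- `matCLM` as a continuous linear map. -/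
noncomputable def matCLML (n : ℕ) :
    Matrix (Fin n) (Fin n) ℝ →L[ℝ] ((Fin n → ℝ) →L[ℝ] (Fin n → ℝ)) :=
  LinearMap.toContinuousLinearMap
    { toFun := matCLM
      map_add' := by intro A B; unfold matCLM; simp
      map_smul' := by intro c A; unfold matCLM; simp }

lemma matCLML_apply {n : ℕ} (A : Matrix (Fin n) (Fin n) ℝ) :
    matCLML n A = matCLM A := rfl

lemma matCLM_mul {n : ℕ} (A B : Matrix (Fin n) (Fin n) ℝ) :
    matCLM A * matCLM B = matCLM (A * B) := by
  ext v
  simp [ContinuousLinearMap.mul_apply, matCLM_apply, Matrix.mulVec_mulVec]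

lemma matCLM_one {n : ℕ} : matCLM (1 : Matrix (Fin n) (Fin n) ℝ) = 1 := by
  ext v
  simp [matCLM_apply]

/-- **Proposition 3.4, part 1.** If `V : M → Sym(n, ℝ)` is a `C¹` map into invertible symmetric
matrices and there is a `C²` map `ψ` with Jacobian `Dψ(m) = V(m)⁻¹`, then the directional
derivatives of `V` satisfy the symmetry `(D_{V(m)Δ}V)(m)·Δ₁ = (D_{V(m)Δ₁}V)(m)·Δ`. -/
theorem variance_function_symmetry {n : ℕ} (hn : 1 ≤ n)
    (M : Set (Fin n → ℝ)) (hM : IsOpen M)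
    (V : (Fin n → ℝ) → Matrix (Fin n) (Fin n) ℝ)
    (hV : ContDiffOn ℝ 1 V M)
    (hVinv : ∀ m ∈ M, IsUnit (V m))
    (hVsymm : ∀ m ∈ M, (V m).IsSymm)
    (ψ : (Fin n → ℝ) → (Fin n → ℝ))
    (hψ : ContDiffOn ℝ 2 ψ M)
    (hψ' : ∀ m ∈ M, HasFDerivAt ψ (matCLM ((V m)⁻¹)) m) :
    ∀ m ∈ M, ∀ Δ Δ₁ : Fin n → ℝ,
      (fderiv ℝ V m ((V m).mulVec Δ)).mulVec Δ₁
        = (fderiv ℝ V m ((V m).mulVec Δ₁)).mulVec Δ := by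
  intro m hm Δ Δ₁
  have hMnhds : M ∈ nhds m := hM.mem_nhds hm
  set A := V m with hA
  have hAdet : IsUnit A.det := (Matrix.isUnit_iff_isUnit_det A).mp (hVinv m hm)
  have hAinvA : A⁻¹ * A = 1 := Matrix.nonsing_inv_mul A hAdet
  have hAAinv : A * A⁻¹ = 1 := Matrix.mul_nonsing_inv A hAdet
  -- the map `f' y = matCLM ((V y)⁻¹)` is differentiable at `m`
  set f' : (Fin n → ℝ) → ((Fin n → ℝ) →L[ℝ] (Fin n → ℝ)) :=
    fun y => matCLM ((V y)⁻¹) with hf'def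
  have heqφ : f' =ᶠ[nhds m] fderiv ℝ ψ := by
    filter_upwards [hMnhds] with y hy
    exact ((hψ' y hy).fderiv).symm
  have hφdiff : DifferentiableAt ℝ (fderiv ℝ ψ) m := by
    have h2 : ContDiffAt ℝ 2 ψ m := hψ.contDiffAt hMnhds
    have := h2.fderiv_right (m := 1) (by norm_num)
    exact this.differentiableAt one_ne_zero
  have hf'diff : DifferentiableAt ℝ f' m := hφdiff.congr_of_eventuallyEq heqφ
  set D2 := fderiv ℝ f' m with hD2
  have hf'' : HasFDerivAt f' D2 m := hf'diff.hasFDerivAt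
  -- symmetry of the second derivative of ψ
  have hsymm : ∀ v w : Fin n → ℝ, D2 v w = D2 w v := by
    intro v w
    refine second_derivative_symmetric_of_eventually (f := ψ) ?_ hf'' v w
    filter_upwards [hMnhds] with y hy
    exact hψ' y hy
  -- derivative of V
  have hVdiff : DifferentiableAt ℝ V m :=
    ((hV.contDiffAt hMnhds).differentiableAt one_ne_zero)
  set Dv := fderiv ℝ V m with hDv
  have hVd : HasFDerivAt V Dv m := hVdiff.hasFDerivAt
  -- derivative of V' = matCLM ∘ V
  set V' : (Fin n → ℝ) → ((Fin n → ℝ) →L[ℝ] (Fin n → ℝ)) :=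
    fun y => matCLM (V y) with hV'def
  have hV'd : HasFDerivAt V' ((matCLML n).comp Dv) m := by
    have := (matCLML n).hasFDerivAt.comp m hVd
    exact this
  -- product rule applied to V' * f' = 1 on M
  have hprod := HasFDerivAt.mul' (𝕜 := ℝ) (𝔸 := (Fin n → ℝ) →L[ℝ] (Fin n → ℝ)) (E := Fin n → ℝ) hV'd hf''
  have hone : HasFDerivAt (fun y => V' y * f' y)
      (0 : (Fin n → ℝ) →L[ℝ] ((Fin n → ℝ) →L[ℝ] (Fin n → ℝ))) m := by
    have hconst : HasFDerivAt (fun _ : Fin n → ℝ =>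
        (1 : (Fin n → ℝ) →L[ℝ] (Fin n → ℝ))) 0 m := hasFDerivAt_const (𝕜 := ℝ) _ _
    apply hconst.congr_of_eventuallyEq
    filter_upwards [hMnhds] with y hy
    have hdet : IsUnit (V y).det := (Matrix.isUnit_iff_isUnit_det (V y)).mp (hVinv y hy)
    simp only [hV'def, hf'def, matCLM_mul, Matrix.mul_nonsing_inv (V y) hdet, matCLM_one]
  have hzero : V' m • D2 + ((matCLML n).comp Dv).smulRight (f' m) = 0 :=
    hprod.unique hone
  -- evaluate the identity at a direction u and a vector w
  have key : ∀ u w : Fin n → ℝ,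
      matCLM A ((D2 u) w) + (matCLM (Dv u)) ((matCLM A⁻¹) w) = 0 := by
    intro u w
    have := congrArg (fun (T : (Fin n → ℝ) →L[ℝ] ((Fin n → ℝ) →L[ℝ] (Fin n → ℝ))) => (T u) w)
      hzero
    simpa [ContinuousLinearMap.add_apply, ContinuousLinearMap.smul_apply,
      ContinuousLinearMap.smulRight_apply, ContinuousLinearMap.comp_apply,
      ContinuousLinearMap.mul_apply, matCLML_apply, hV'def, hf'def, ← hA] using this
  have hsimp : ∀ x : Fin n → ℝ, (matCLM A⁻¹) (A.mulVec x) = x := by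
    intro x
    rw [matCLM_apply, Matrix.mulVec_mulVec, hAinvA, Matrix.one_mulVec]
  have hkey' : ∀ u w : Fin n → ℝ,
      (Dv u).mulVec w = -(A.mulVec ((D2 u) (A.mulVec w))) := by
    intro u w
    have h := key u (A.mulVec w)
    rw [hsimp w, matCLM_apply, matCLM_apply] at h
    exact eq_neg_of_add_eq_zero_left (by rw [add_comm]; exact h)
  rw [hkey' (A.mulVec Δ) Δ₁, hkey' (A.mulVec Δ₁) Δ, hsymm]
end

section
/- (Theorem 5.2.) Let n ≥ 1, let a ∈ ℝ, let B₁, …, Bₙ and C be real symmetric n×n matrices, and define V : ℝⁿ → Sym(n, ℝ) by V(m) = a·mmᵀ + m₁B₁ + ⋯ + mₙBₙ + C. Let g = [[A, b], [cᵀ, d]] be an invertible real (n+1)×(n+1) matrix. Then there exists a symmetric n×n matrix P(m) whose entries are real polynomials in the variables m₁, …, mₙ of total degree at most 3 such that T_g(V)(m) = P(m) for every m ∈ ℝⁿ with cᵀm + d > 0. -/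
open Matrix

/-- The transformation `T_g(V)(m) = (cᵀm + d)⁻¹ (h'_g(m))⁻¹ V(h_g(m)) ((h'_g(m))ᵀ)⁻¹`. -/
noncomputable def Tg {n : ℕ} (A : Matrix (Fin n) (Fin n) ℝ) (b c : Fin n → ℝ) (d : ℝ)
    (V : (Fin n → ℝ) → Matrix (Fin n) (Fin n) ℝ) (m : Fin n → ℝ) :
    Matrix (Fin n) (Fin n) ℝ :=
  (c ⬝ᵥ m + d)⁻¹ •
    ((homogJac A b c d m)⁻¹ * V (homog A b c d m) * ((homogJac A b c d m)ᵀ)⁻¹)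

section Helpers

lemma myVecMulVec_mulVec {n : ℕ} (v w x : Fin n → ℝ) :
    (vecMulVec v w).mulVec x = (w ⬝ᵥ x) • v := by
  funext i
  simp only [Matrix.mulVec, dotProduct, vecMulVec_apply, Pi.smul_apply, smul_eq_mul]
  rw [Finset.sum_mul]
  exact Finset.sum_congr rfl fun j _ => by ring

lemma myVecMulVec_mul {n : ℕ} (v w : Fin n → ℝ) (A : Matrix (Fin n) (Fin n) ℝ) :
    vecMulVec v w * A = vecMulVec v (w ᵥ* A) := by
  ext i j
  simp only [Matrix.mul_apply, vecMulVec_apply, Matrix.vecMul, dotProduct, Finset.mul_sum]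
  exact Finset.sum_congr rfl fun k _ => by ring

lemma myMul_vecMulVec {n : ℕ} (A : Matrix (Fin n) (Fin n) ℝ) (v w : Fin n → ℝ) :
    A * vecMulVec v w = vecMulVec (A.mulVec v) w := by
  ext i j
  simp only [Matrix.mul_apply, vecMulVec_apply, Matrix.mulVec, dotProduct, Finset.sum_mul]
  exact Finset.sum_congr rfl fun k _ => by ring

lemma sandwich_apply {n : ℕ} (M B N : Matrix (Fin n) (Fin n) ℝ) (i j : Fin n) :
    (M * B * Nᵀ) i j = ∑ s, ∑ t, M i s * B s t * N j t := by
  simp only [Matrix.mul_apply, Matrix.transpose_apply, Finset.sum_mul]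
  rw [Finset.sum_comm]

end Helpers

/-- **Theorem 5.2.** If `V(m) = a mmᵀ + m₁B₁ + ⋯ + mₙBₙ + C` is a simple quadratic matrix
function and `g` is invertible, then `T_g(V)` is given by a symmetric matrix of polynomials of
total degree at most `3` on the half space `cᵀm + d > 0`. -/
theorem Tg_of_simple_quadratic_is_cubic_polynomial {n : ℕ} (hn : 1 ≤ n)
    (a : ℝ) (B : Fin n → Matrix (Fin n) (Fin n) ℝ) (C : Matrix (Fin n) (Fin n) ℝ)
    (hB : ∀ i, (B i).IsSymm) (hC : C.IsSymm)
    (A : Matrix (Fin n) (Fin n) ℝ) (b c : Fin n → ℝ) (d : ℝ)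
    (hg : (blockMat A b c d).det ≠ 0) :
    ∃ P : Matrix (Fin n) (Fin n) (MvPolynomial (Fin n) ℝ),
      (∀ i j, P i j = P j i) ∧
      (∀ i j, (P i j).totalDegree ≤ 3) ∧
      (∀ m : Fin n → ℝ, 0 < c ⬝ᵥ m + d →
        Tg A b c d (fun x => a • vecMulVec x x + (∑ i, x i • B i) + C) m
          = Matrix.of fun i j => MvPolynomial.eval m (P i j)) := by
  classical
  -- extract the inverse block matrix
  obtain ⟨A', b', c', d', h1, h2, h3, h4⟩ :
      ∃ (A' : Matrix (Fin n) (Fin n) ℝ) (b' c' : Fin n → ℝ) (d' : ℝ),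
        (A' * A + vecMulVec b' c = 1) ∧
        (A'.mulVec b + d • b' = 0) ∧
        (c' ᵥ* A + d' • c = 0) ∧
        (c' ⬝ᵥ b + d' * d = 1) := by
    have hZ2 : (blockMat A b c d)⁻¹ * blockMat A b c d = 1 :=
      Matrix.nonsing_inv_mul _ (isUnit_iff_ne_zero.mpr hg)
    set Z := (blockMat A b c d)⁻¹ with hZ
    refine ⟨Matrix.of fun i j => Z (Sum.inl i) (Sum.inl j),
      fun i => Z (Sum.inl i) (Sum.inr ()),
      fun j => Z (Sum.inr ()) (Sum.inl j),
      Z (Sum.inr ()) (Sum.inr ()), ?_, ?_, ?_, ?_⟩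
    · ext i j
      have h := congrFun (congrFun hZ2 (Sum.inl i)) (Sum.inl j)
      simp only [Matrix.mul_apply, Fintype.sum_sum_type, blockMat, fromBlocks_apply₁₁,
        fromBlocks_apply₂₁, Finset.univ_unique, Finset.sum_singleton, Matrix.one_apply,
        Sum.inl.injEq] at h
      simpa [Matrix.mul_apply, vecMulVec_apply, Matrix.one_apply, fromBlocks, Sum.elim_inl, Sum.elim_inr] using h
    · funext i
      have h := congrFun (congrFun hZ2 (Sum.inl i)) (Sum.inr ())
      simp only [Matrix.mul_apply, Fintype.sum_sum_type, blockMat, fromBlocks_apply₁₂,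
        fromBlocks_apply₂₂, Finset.univ_unique, Finset.sum_singleton, Matrix.one_apply,
        reduceCtorEq, if_false] at h
      simpa [Matrix.mulVec, dotProduct, mul_comm, fromBlocks, Sum.elim_inl, Sum.elim_inr] using h
    · funext j
      have h := congrFun (congrFun hZ2 (Sum.inr ())) (Sum.inl j)
      simp only [Matrix.mul_apply, Fintype.sum_sum_type, blockMat, fromBlocks_apply₁₁,
        fromBlocks_apply₂₁, Finset.univ_unique, Finset.sum_singleton, Matrix.one_apply,
        reduceCtorEq, if_false] at h
      simpa [Matrix.vecMul, dotProduct, fromBlocks, Sum.elim_inl, Sum.elim_inr] using h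
    · have h := congrFun (congrFun hZ2 (Sum.inr ())) (Sum.inr ())
      simp only [Matrix.mul_apply, Fintype.sum_sum_type, blockMat, fromBlocks_apply₁₂,
        fromBlocks_apply₂₂, Finset.univ_unique, Finset.sum_singleton, Matrix.one_apply] at h
      simpa [dotProduct, fromBlocks, Sum.elim_inl, Sum.elim_inr] using h
  -- the polynomial data
  set Lp : MvPolynomial (Fin n) ℝ :=
    (∑ k, MvPolynomial.C (c k) * MvPolynomial.X k) + MvPolynomial.C d with hLp
  set Up : Fin n → MvPolynomial (Fin n) ℝ :=
    fun k => (∑ l, MvPolynomial.C (A k l) * MvPolynomial.X l) + MvPolynomial.C (b k) with hUp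
  set Wp : Fin n → MvPolynomial (Fin n) ℝ :=
    fun i => MvPolynomial.C d' * MvPolynomial.X i - MvPolynomial.C (b' i) with hWp
  set Np : Fin n → Fin n → MvPolynomial (Fin n) ℝ :=
    fun i s => MvPolynomial.C (A' i s) - MvPolynomial.X i * MvPolynomial.C (c' s) with hNp
  set Qp : Matrix (Fin n) (Fin n) ℝ → Fin n → Fin n → MvPolynomial (Fin n) ℝ :=
    fun M i j => ∑ s, ∑ t, Np i s * MvPolynomial.C (M s t) * Np j t with hQp
  refine ⟨Matrix.of fun i j =>
      MvPolynomial.C a * Lp * (Wp i * Wp j) + (∑ k, Up k * Qp (B k) i j) + Lp * Qp C i j,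
    ?_, ?_, ?_⟩
  · -- symmetry
    intro i j
    have hQsymm : ∀ (M : Matrix (Fin n) (Fin n) ℝ), M.IsSymm → Qp M i j = Qp M j i := by
      intro M hM
      rw [hQp]
      simp only
      rw [Finset.sum_comm]
      refine Finset.sum_congr rfl fun s _ => Finset.sum_congr rfl fun t _ => ?_
      rw [hM.apply t s]
      ring
    simp only [Matrix.of_apply]
    rw [hQsymm C hC, mul_comm (Wp i) (Wp j),
      Finset.sum_congr rfl fun k _ => by rw [hQsymm (B k) (hB k)]]
  · -- degree bound
    intro i j
    have hL : Lp.totalDegree ≤ 1 := by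
      refine (MvPolynomial.totalDegree_add _ _).trans (max_le ?_ ?_)
      · refine MvPolynomial.totalDegree_finsetSum_le fun k _ => ?_
        refine (MvPolynomial.totalDegree_mul _ _).trans ?_
        simp [MvPolynomial.totalDegree_C, MvPolynomial.totalDegree_X]
      · simp [MvPolynomial.totalDegree_C]
    have hU : ∀ k, (Up k).totalDegree ≤ 1 := by
      intro k
      refine (MvPolynomial.totalDegree_add _ _).trans (max_le ?_ ?_)
      · refine MvPolynomial.totalDegree_finsetSum_le fun l _ => ?_
        refine (MvPolynomial.totalDegree_mul _ _).trans ?_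
        simp [MvPolynomial.totalDegree_C, MvPolynomial.totalDegree_X]
      · simp [MvPolynomial.totalDegree_C]
    have hW : ∀ i, (Wp i).totalDegree ≤ 1 := by
      intro i
      refine (MvPolynomial.totalDegree_sub _ _).trans (max_le ?_ ?_)
      · refine (MvPolynomial.totalDegree_mul _ _).trans ?_
        simp [MvPolynomial.totalDegree_C, MvPolynomial.totalDegree_X]
      · simp [MvPolynomial.totalDegree_C]
    have hN : ∀ i s, (Np i s).totalDegree ≤ 1 := by
      intro i s
      refine (MvPolynomial.totalDegree_sub _ _).trans (max_le ?_ ?_)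
      · simp [MvPolynomial.totalDegree_C]
      · refine (MvPolynomial.totalDegree_mul _ _).trans ?_
        simp [MvPolynomial.totalDegree_C, MvPolynomial.totalDegree_X]
    have hQ : ∀ (M : Matrix (Fin n) (Fin n) ℝ) i j, (Qp M i j).totalDegree ≤ 2 := by
      intro M i j
      refine MvPolynomial.totalDegree_finsetSum_le fun s _ => ?_
      refine MvPolynomial.totalDegree_finsetSum_le fun t _ => ?_
      refine (MvPolynomial.totalDegree_mul _ _).trans ?_
      have e1 : (Np i s * MvPolynomial.C (M s t)).totalDegree ≤ 1 :=
        (MvPolynomial.totalDegree_mul _ _).trans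
          (by simpa [MvPolynomial.totalDegree_C] using hN i s)
      exact (add_le_add e1 (hN j t)).trans (by norm_num)
    simp only [Matrix.of_apply]
    refine (MvPolynomial.totalDegree_add _ _).trans
      (max_le ((MvPolynomial.totalDegree_add _ _).trans (max_le ?_ ?_)) ?_)
    · refine (MvPolynomial.totalDegree_mul _ _).trans ?_
      have e1 : (MvPolynomial.C a * Lp).totalDegree ≤ 1 :=
        (MvPolynomial.totalDegree_mul _ _).trans
          (by simpa [MvPolynomial.totalDegree_C] using hL)
      have e2 : (Wp i * Wp j).totalDegree ≤ 2 :=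
        (MvPolynomial.totalDegree_mul _ _).trans (add_le_add (hW i) (hW j))
      exact (add_le_add e1 e2).trans (by norm_num)
    · refine MvPolynomial.totalDegree_finsetSum_le fun k _ => ?_
      refine (MvPolynomial.totalDegree_mul _ _).trans ?_
      exact (add_le_add (hU k) (hQ (B k) i j)).trans (by norm_num)
    · refine (MvPolynomial.totalDegree_mul _ _).trans ?_
      exact (add_le_add hL (hQ C i j)).trans (by norm_num)
  · -- evaluation on the half-space
    intro m hm
    set lam : ℝ := c ⬝ᵥ m + d with hlamdef
    have hlam : lam ≠ 0 := ne_of_gt hm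
    set u : Fin n → ℝ := A.mulVec m + b with hudef
    set N' : Matrix (Fin n) (Fin n) ℝ := Matrix.of fun i j => A' i j - m i * c' j with hN'def
    set wv : Fin n → ℝ := fun i => d' * m i - b' i with hwv
    have hN'eq : N' = A' - vecMulVec m c' := by
      ext i j; simp [hN'def, vecMulVec_apply]
    have hA'u : A'.mulVec u = m - lam • b' := by
      rw [hudef, mulVec_add, mulVec_mulVec, eq_sub_of_add_eq h1, eq_neg_of_add_eq_zero_left h2,
        sub_mulVec, one_mulVec, myVecMulVec_mulVec]
      funext i
      simp only [Pi.sub_apply, Pi.add_apply, Pi.neg_apply, Pi.smul_apply, smul_eq_mul, hlamdef]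
      ring
    have hc'u : c' ⬝ᵥ u = 1 - lam * d' := by
      rw [hudef, dotProduct_add, dotProduct_mulVec, eq_neg_of_add_eq_zero_left h3,
        eq_sub_of_add_eq h4, neg_dotProduct, smul_dotProduct]
      simp only [smul_eq_mul, hlamdef]
      ring
    have hN'u : N'.mulVec u = lam • wv := by
      rw [hN'eq, sub_mulVec, myVecMulVec_mulVec, hA'u, hc'u]
      funext i
      simp only [Pi.sub_apply, Pi.smul_apply, smul_eq_mul, hwv]
      ring
    have hN'A : N' * A = 1 - vecMulVec b' c + d' • vecMulVec m c := by
      rw [hN'eq, Matrix.sub_mul, myVecMulVec_mul, eq_sub_of_add_eq h1,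
        eq_neg_of_add_eq_zero_left h3]
      ext i j
      simp only [Matrix.sub_apply, Matrix.add_apply, Matrix.smul_apply, vecMulVec_apply,
        Pi.neg_apply, Pi.smul_apply, smul_eq_mul, Matrix.one_apply]
      ring
    have hmain : N' * (lam • A - vecMulVec u c) = lam • 1 := by
      rw [Matrix.mul_sub, Matrix.mul_smul, hN'A, myMul_vecMulVec, hN'u]
      ext i j
      simp only [Matrix.sub_apply, Matrix.add_apply, Matrix.smul_apply, vecMulVec_apply,
        Pi.smul_apply, smul_eq_mul, Matrix.one_apply, hwv]
      by_cases h : i = j <;> simp [h] <;> ring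
    have hJ : ((lam • N') : Matrix (Fin n) (Fin n) ℝ) * homogJac A b c d m = 1 := by
      show (lam • N') * ((lam ^ 2)⁻¹ • (lam • A - vecMulVec u c)) = 1
      rw [Matrix.mul_smul, Matrix.smul_mul, hmain, smul_smul, smul_smul]
      have : (lam ^ 2)⁻¹ * lam * lam = 1 := by
        field_simp
      rw [this, one_smul]
    have hJi : (homogJac A b c d m)⁻¹ = lam • N' := Matrix.inv_eq_left_inv hJ
    have hJti : ((homogJac A b c d m)ᵀ)⁻¹ = lam • N'ᵀ := by
      rw [← Matrix.transpose_nonsing_inv, hJi, Matrix.transpose_smul]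
    have hh : homog A b c d m = lam⁻¹ • u := rfl
    have hNmulu : N'.mulVec (lam⁻¹ • u) = wv := by
      rw [mulVec_smul, hN'u, smul_smul, inv_mul_cancel₀ hlam, one_smul]
    -- unfold Tg and substitute
    simp only [Tg, hJi, hJti, hh, ← hlamdef]
    have e1 : N' * (a • vecMulVec (lam⁻¹ • u) (lam⁻¹ • u)) * N'ᵀ = a • vecMulVec wv wv := by
      rw [Matrix.mul_smul, Matrix.smul_mul, myMul_vecMulVec, myVecMulVec_mul,
        vecMul_transpose, hNmulu]
    have e2 : N' * (∑ k, (lam⁻¹ • u) k • B k) * N'ᵀ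
        = lam⁻¹ • ∑ k, u k • (N' * B k * N'ᵀ) := by
      rw [Finset.mul_sum, Finset.sum_mul, Finset.smul_sum]
      refine Finset.sum_congr rfl fun k _ => ?_
      rw [Matrix.mul_smul, Matrix.smul_mul, smul_smul]
      simp [Pi.smul_apply, smul_eq_mul, smul_smul]
    have hNVN : N' * (a • vecMulVec (lam⁻¹ • u) (lam⁻¹ • u)
          + (∑ k, (lam⁻¹ • u) k • B k) + C) * N'ᵀ
        = a • vecMulVec wv wv + lam⁻¹ • (∑ k, u k • (N' * B k * N'ᵀ)) + N' * C * N'ᵀ := by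
      rw [Matrix.mul_add, Matrix.mul_add, Matrix.add_mul, Matrix.add_mul, e1, e2]
    have step1 : ∀ (M : Matrix (Fin n) (Fin n) ℝ),
        (lam • N') * M * (lam • N'ᵀ) = (lam * lam) • (N' * M * N'ᵀ) := by
      intro M
      rw [Matrix.smul_mul, Matrix.smul_mul, Matrix.mul_smul, smul_smul]
    rw [step1, hNVN, smul_smul]
    have hc3 : lam⁻¹ * (lam * lam) = lam := by field_simp
    rw [hc3, smul_add, smul_add, smul_smul, smul_smul, mul_inv_cancel₀ hlam, one_smul]
    -- entrywise comparison with the evaluated polynomial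
    ext i j
    simp only [Matrix.add_apply, Matrix.smul_apply, Matrix.sum_apply, smul_eq_mul,
      sandwich_apply, Matrix.of_apply, vecMulVec_apply, hN'def, hwv, hudef, hlamdef,
      hLp, hUp, hWp, hNp, hQp, map_add, _root_.map_mul, map_sub, map_sum,
      MvPolynomial.eval_C, MvPolynomial.eval_X, Pi.add_apply, Matrix.mulVec, dotProduct]
    ring
end

section
/- For g_c = [[Iₙ, 0], [cᵀ, 1]] with c ∈ ℝⁿ, and for every m ∈ ℝⁿ with cᵀm + 1 > 0, the following three identities hold: (i) if V(m) = mmᵀ then T_{g_c}(V)(m) = (cᵀm + 1)·mmᵀ; (ii) if V(m) = m₁B₁ + ⋯ + mₙBₙ with B₁, …, Bₙ real symmetric n×n matrices, then T_{g_c}(V)(m) = (Iₙ + mcᵀ)·V(m)·(Iₙ + cmᵀ); (iii) if V(m) = C is a constant real symmetric n×n matrix, then T_{g_c}(V)(m) = (cᵀm + 1)·(Iₙ + mcᵀ)·C·(Iₙ + cmᵀ). -/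
open Matrix

private lemma vmv_mul_vmv {n : ℕ} (a b x y : Fin n → ℝ) :
    vecMulVec a b * vecMulVec x y = (b ⬝ᵥ x) • vecMulVec a y := by
  ext i j
  simp only [Matrix.mul_apply, vecMulVec_apply, Matrix.smul_apply, dotProduct, smul_eq_mul,
    Finset.sum_mul]
  exact Finset.sum_congr rfl fun k _ => by ring

private lemma vmv_transpose {n : ℕ} (a b : Fin n → ℝ) :
    (vecMulVec a b)ᵀ = vecMulVec b a := by
  ext i j
  simp [vecMulVec_apply, mul_comm]

private lemma mul_vmv {n : ℕ} (A : Matrix (Fin n) (Fin n) ℝ) (a b : Fin n → ℝ) :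
    A * vecMulVec a b = vecMulVec (A.mulVec a) b := by
  ext i j
  simp only [Matrix.mul_apply, vecMulVec_apply, mulVec, dotProduct, Finset.sum_mul]
  exact Finset.sum_congr rfl fun k _ => by ring

private lemma vmv_mul {n : ℕ} (A : Matrix (Fin n) (Fin n) ℝ) (a b : Fin n → ℝ) :
    vecMulVec a b * A = vecMulVec a (A.vecMul b) := by
  ext i j
  simp only [Matrix.mul_apply, vecMulVec_apply, vecMul, dotProduct, Finset.mul_sum]
  exact Finset.sum_congr rfl fun k _ => by ring

private lemma vmv_smul_left {n : ℕ} (t : ℝ) (a b : Fin n → ℝ) :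
    vecMulVec (t • a) b = t • vecMulVec a b := by
  ext i j
  simp [vecMulVec_apply, mul_assoc]

private lemma vmv_smul_right {n : ℕ} (t : ℝ) (a b : Fin n → ℝ) :
    vecMulVec a (t • b) = t • vecMulVec a b := by
  ext i j
  simp [vecMulVec_apply]; ring

/-- The three remarkable formulas for `T_{g_c}` applied to the quadratic part `mmᵀ`, to a linear
part `B(m) = m₁B₁ + ⋯ + mₙBₙ` and to a constant part `C`, where `g_c = [[Iₙ, 0], [cᵀ, 1]]`. -/
theorem Tg_gc_formulas {n : ℕ} (hn : 1 ≤ n) (c : Fin n → ℝ)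
    (B : Fin n → Matrix (Fin n) (Fin n) ℝ) (hB : ∀ i, (B i).IsSymm)
    (C : Matrix (Fin n) (Fin n) ℝ) (hC : C.IsSymm)
    (m : Fin n → ℝ) (hm : 0 < c ⬝ᵥ m + 1) :
    Tg 1 0 c 1 (fun x => vecMulVec x x) m = (c ⬝ᵥ m + 1) • vecMulVec m m ∧
    Tg 1 0 c 1 (fun x => ∑ i, x i • B i) m
      = (1 + vecMulVec m c) * (∑ i, m i • B i) * (1 + vecMulVec c m) ∧
    Tg 1 0 c 1 (fun _ => C) m
      = (c ⬝ᵥ m + 1) • ((1 + vecMulVec m c) * C * (1 + vecMulVec c m)) := by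
  set t : ℝ := c ⬝ᵥ m + 1 with ht
  have ht0 : t ≠ 0 := ne_of_gt hm
  set M : Matrix (Fin n) (Fin n) ℝ := vecMulVec m c with hM
  have hMM : M * M = (c ⬝ᵥ m) • M := vmv_mul_vmv m c m c
  have hJ : homogJac 1 0 c 1 m = (t ^ 2)⁻¹ • (t • 1 - M) := by
    simp [homogJac, one_mulVec, ht, hM]
  have hKey : (t • 1 - M) * (1 + M) = t • (1 : Matrix (Fin n) (Fin n) ℝ) := by
    have : (t • 1 - M) * (1 + M) = t • 1 + t • M - M - M * M := by
      noncomm_ring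
    rw [this, hMM, ht]
    module
  have hJK : homogJac 1 0 c 1 m * (t • (1 + M)) = 1 := by
    rw [hJ, Matrix.smul_mul, Matrix.mul_smul, hKey, smul_smul, smul_smul]
    rw [show (t ^ 2)⁻¹ * t * t = 1 by field_simp, one_smul]
  have hinv : (homogJac 1 0 c 1 m)⁻¹ = t • (1 + M) := inv_eq_right_inv hJK
  have htinv : ((homogJac 1 0 c 1 m)ᵀ)⁻¹ = t • (1 + vecMulVec c m) := by
    rw [← Matrix.transpose_nonsing_inv, hinv, Matrix.transpose_smul, Matrix.transpose_add,
      Matrix.transpose_one, hM, vmv_transpose]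
  have hhom : homog 1 0 c 1 m = t⁻¹ • m := by
    simp [homog, one_mulVec, ht]
  refine ⟨?_, ?_, ?_⟩
  · -- quadratic part
    rw [Tg, hinv, htinv, hhom]
    have hV : vecMulVec (t⁻¹ • m) (t⁻¹ • m) = (t⁻¹ * t⁻¹) • vecMulVec m m := by
      rw [vmv_smul_left, vmv_smul_right, smul_smul]
    have h1 : (1 + M) * vecMulVec m m = t • vecMulVec m m := by
      rw [add_mul, one_mul, hM, vmv_mul_vmv, ht]
      module
    have h2 : vecMulVec m m * (1 + vecMulVec c m) = t • vecMulVec m m := by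
      rw [mul_add, mul_one, vmv_mul_vmv, dotProduct_comm, ht]
      module
    rw [hV]
    simp only [Matrix.smul_mul, Matrix.mul_smul, smul_smul]
    rw [h1, Matrix.smul_mul, h2, ← ht]
    simp only [smul_smul]
    congr 1
    field_simp
  · -- linear part
    rw [Tg, hinv, htinv, hhom]
    have hV : (∑ i, (t⁻¹ • m) i • B i) = t⁻¹ • ∑ i, m i • B i := by
      rw [Finset.smul_sum]
      exact Finset.sum_congr rfl fun i _ => by simp [smul_smul]
    rw [hV, ← ht]
    simp only [Matrix.smul_mul, Matrix.mul_smul, smul_smul]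
    rw [show t⁻¹ * (t * (t⁻¹ * t)) = 1 by field_simp, one_smul]
  · -- constant part
    rw [Tg, hinv, htinv, Matrix.smul_mul, Matrix.smul_mul, Matrix.mul_smul, ← ht]
    simp only [smul_smul]
    rw [show t⁻¹ * (t * t) = t by field_simp]
end

section
/- (Proposition 6.3, part 1.) Let n ≥ 1 and let (μ_k)_{k∈ℕⁿ} be nonnegative real numbers with μ₀ > 0 and μ_{e_i} > 0 for every standard basis vector e_i of ℝⁿ. Let Θ = { θ ∈ ℝⁿ : Σ_{k∈ℕⁿ} μ_k e^{⟨θ,k⟩} < ∞ } and assume the interior Θ° of Θ is nonempty. Define k(θ) = log ( Σ_{k∈ℕⁿ} μ_k e^{⟨θ,k⟩} ) for θ ∈ Θ°. Then: (i) for every θ ∈ Θ°, every coordinate of the gradient ∇k(θ) is strictly positive (so the domain of the means M = ∇k(Θ°) is contained in (0,∞)ⁿ); and (ii) 0 belongs to the closure of M = { ∇k(θ) : θ ∈ Θ° }. -/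
open scoped BigOperators

/-- The set `Θ(μ)` where the Laplace transform of `μ = Σ_{k∈ℕⁿ} μ_k δ_k` is finite. -/
def LaplaceDomain {n : ℕ} (μ : (Fin n → ℕ) → ℝ) : Set (Fin n → ℝ) :=
  {θ | Summable fun k : Fin n → ℕ => μ k * Real.exp (∑ i, θ i * (k i : ℝ))}

/-- The cumulant function `k(θ) = log Σ_{k∈ℕⁿ} μ_k e^{⟨θ,k⟩}`. -/
noncomputable def cumulant {n : ℕ} (μ : (Fin n → ℕ) → ℝ) (θ : Fin n → ℝ) : ℝ :=
  Real.log (∑' k : Fin n → ℕ, μ k * Real.exp (∑ i, θ i * (k i : ℝ)))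

open Metric MeasureTheory

open Metric MeasureTheory

variable {n : ℕ}

/-- Linear functional `v ↦ ∑ i, k i * v i`. -/
noncomputable def linK (k : Fin n → ℕ) : (Fin n → ℝ) →L[ℝ] ℝ :=
  ∑ i, (k i : ℝ) • (ContinuousLinearMap.proj i : (Fin n → ℝ) →L[ℝ] ℝ)

lemma linK_apply (k : Fin n → ℕ) (v : Fin n → ℝ) :
    linK k v = ∑ i, (k i : ℝ) * v i := by
  simp [linK, smul_eq_mul]

lemma linK_norm_le (k : Fin n → ℕ) : ‖linK k‖ ≤ ∑ i, (k i : ℝ) := by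
  refine ContinuousLinearMap.opNorm_le_bound _ (by positivity) fun v => ?_
  rw [linK_apply]
  calc ‖∑ i, (k i : ℝ) * v i‖ ≤ ∑ i, ‖(k i : ℝ) * v i‖ := norm_sum_le _ _
    _ ≤ ∑ i, (k i : ℝ) * ‖v‖ := by
        refine Finset.sum_le_sum fun i _ => ?_
        rw [norm_mul, Real.norm_natCast]
        exact mul_le_mul_of_nonneg_left (norm_le_pi_norm v i) (by positivity)
    _ = (∑ i, (k i : ℝ)) * ‖v‖ := (Finset.sum_mul _ _ _).symm

lemma linK_single (k : Fin n → ℕ) (i : Fin n) :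
    linK k (Pi.single i 1) = (k i : ℝ) := by
  rw [linK_apply]
  simp [Pi.single_apply, mul_ite, Finset.sum_ite_eq']
lemma laplace_mono (μ : (Fin n → ℕ) → ℝ) (hμ : ∀ k, 0 ≤ μ k) {θ θ' : Fin n → ℝ}
    (h : ∀ i, θ' i ≤ θ i) (hθ : θ ∈ LaplaceDomain μ) : θ' ∈ LaplaceDomain μ := by
  refine Summable.of_nonneg_of_le (fun k => by
      exact mul_nonneg (hμ k) (Real.exp_pos _).le) (fun k => ?_) hθ
  refine mul_le_mul_of_nonneg_left (Real.exp_le_exp.2 ?_) (hμ k)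
  exact Finset.sum_le_sum fun i _ => mul_le_mul_of_nonneg_right (h i) (k i).cast_nonneg

lemma interior_sub_const (μ : (Fin n → ℕ) → ℝ) (hμ : ∀ k, 0 ≤ μ k) {θ : Fin n → ℝ}
    (hθ : θ ∈ interior (LaplaceDomain μ)) {t : ℝ} (ht : 0 ≤ t) :
    θ - (fun _ => t) ∈ interior (LaplaceDomain μ) := by
  rw [mem_interior_iff_mem_nhds, Metric.mem_nhds_iff] at hθ ⊢
  obtain ⟨r, hr, hball⟩ := hθ
  refine ⟨r, hr, fun y hy => ?_⟩
  have h1 : y + (fun _ => t) ∈ LaplaceDomain μ := by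
    apply hball
    have hd : dist (y + fun _ => t) θ = dist y (θ - fun _ => t) := by
      have hθeq : θ = (θ - fun _ => t) + (fun _ => t) := by abel
      nth_rewrite 1 [hθeq]
      exact dist_add_right _ _ _
    rw [Metric.mem_ball, hd]
    exact Metric.mem_ball.1 hy
  refine laplace_mono μ hμ (fun i => ?_) h1
  simp only [Pi.add_apply]
  linarith

lemma summable_weighted (μ : (Fin n → ℕ) → ℝ) (hμ : ∀ k, 0 ≤ μ k) {θ : Fin n → ℝ}
    (hθ : θ ∈ interior (LaplaceDomain μ)) :
    Summable fun k : Fin n → ℕ =>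
      μ k * (∑ i, (k i : ℝ)) * Real.exp (∑ i, θ i * (k i : ℝ)) := by
  rw [mem_interior_iff_mem_nhds, Metric.mem_nhds_iff] at hθ
  obtain ⟨r, hr, hball⟩ := hθ
  set δ : ℝ := r / 2 with hδdef
  have hδ : 0 < δ := by positivity
  have hθ' : (θ + (fun _ => δ : Fin n → ℝ)) ∈ LaplaceDomain μ := by
    apply hball
    rw [Metric.mem_ball, dist_comm]
    have h1 : dist θ (θ + (fun _ => δ : Fin n → ℝ)) ≤ δ := by
      rw [dist_pi_le_iff hδ.le]
      intro i
      simp [Real.dist_eq, abs_of_nonneg hδ.le]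
    have : δ < r := by rw [hδdef]; linarith
    linarith
  have hsum : Summable fun k : Fin n → ℕ =>
      δ⁻¹ * (μ k * Real.exp (∑ i, (θ + (fun _ => δ : Fin n → ℝ)) i * (k i : ℝ))) :=
    hθ'.mul_left _
  refine Summable.of_nonneg_of_le (fun k => ?_) (fun k => ?_) hsum
  · exact mul_nonneg (mul_nonneg (hμ k) (by positivity)) (Real.exp_pos _).le
  · have hexp : ∑ i, (θ + (fun _ => δ : Fin n → ℝ)) i * (k i : ℝ)
        = (∑ i, θ i * (k i : ℝ)) + δ * ∑ i, (k i : ℝ) := by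
      simp only [Pi.add_apply]
      rw [Finset.mul_sum, ← Finset.sum_add_distrib]
      exact Finset.sum_congr rfl fun i _ => by ring
    rw [hexp, Real.exp_add]
    have hkey : (∑ i, (k i : ℝ)) ≤ δ⁻¹ * Real.exp (δ * ∑ i, (k i : ℝ)) := by
      rw [le_inv_mul_iff₀ hδ]
      have := Real.add_one_le_exp (δ * ∑ i, (k i : ℝ))
      linarith
    have h2 : μ k * (∑ i, (k i : ℝ)) * Real.exp (∑ i, θ i * (k i : ℝ))
        ≤ μ k * (δ⁻¹ * Real.exp (δ * ∑ i, (k i : ℝ))) * Real.exp (∑ i, θ i * (k i : ℝ)) :=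
      mul_le_mul_of_nonneg_right (mul_le_mul_of_nonneg_left hkey (hμ k)) (Real.exp_pos _).le
    calc μ k * (∑ i, (k i : ℝ)) * Real.exp (∑ i, θ i * (k i : ℝ))
        ≤ μ k * (δ⁻¹ * Real.exp (δ * ∑ i, (k i : ℝ))) * Real.exp (∑ i, θ i * (k i : ℝ)) := h2
      _ = δ⁻¹ * (μ k * (Real.exp (∑ i, θ i * (k i : ℝ)) * Real.exp (δ * ∑ i, (k i : ℝ)))) := by
          ring
noncomputable def Zsum {n : ℕ} (μ : (Fin n → ℕ) → ℝ) (θ : Fin n → ℝ) : ℝ :=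
  ∑' k : Fin n → ℕ, μ k * Real.exp (∑ i, θ i * (k i : ℝ))

lemma hasFDerivAt_Zsum (μ : (Fin n → ℕ) → ℝ) (hμ : ∀ k, 0 ≤ μ k) {θ : Fin n → ℝ}
    (hθ : θ ∈ interior (LaplaceDomain μ)) :
    Summable (fun k : Fin n → ℕ => (μ k * Real.exp (∑ i, θ i * (k i : ℝ))) • linK k) ∧
    HasFDerivAt (Zsum μ)
      (∑' k : Fin n → ℕ, (μ k * Real.exp (∑ i, θ i * (k i : ℝ))) • linK k) θ := by
  obtain ⟨r, hr, hball⟩ := Metric.mem_nhds_iff.1 (mem_interior_iff_mem_nhds.1 hθ)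
  set δ : ℝ := r / 4 with hδdef
  have hδ : 0 < δ := by positivity
  -- θ + δ𝟙 is in the interior
  have hθ' : (θ + (fun _ => δ : Fin n → ℝ)) ∈ interior (LaplaceDomain μ) := by
    rw [mem_interior_iff_mem_nhds, Metric.mem_nhds_iff]
    refine ⟨r/2, by positivity, fun y hy => ?_⟩
    apply hball
    rw [Metric.mem_ball] at hy ⊢
    have h1 : dist (θ + (fun _ => δ : Fin n → ℝ)) θ ≤ δ := by
      rw [dist_pi_le_iff hδ.le]
      intro i
      simp [Real.dist_eq, abs_of_nonneg hδ.le]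
    calc dist y θ ≤ dist y (θ + (fun _ => δ : Fin n → ℝ))
          + dist (θ + (fun _ => δ : Fin n → ℝ)) θ := dist_triangle _ _ _
      _ < r/2 + δ := by linarith
      _ ≤ r := by rw [hδdef]; linarith
  -- the summable bound
  set bound : (Fin n → ℕ) → ℝ := fun k =>
    μ k * (∑ i, (k i : ℝ)) * Real.exp (∑ i, (θ + (fun _ => δ : Fin n → ℝ)) i * (k i : ℝ))
    with hbounddef
  have hbound_sum : Summable bound := summable_weighted μ hμ hθ'
  -- pointwise bound on the ball
  have hb : ∀ (k : Fin n → ℕ), ∀ x ∈ Metric.ball θ δ,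
      ‖(μ k * Real.exp (∑ i, x i * (k i : ℝ))) • linK k‖ ≤ bound k := by
    intro k x hx
    have hns := norm_smul (μ k * Real.exp (∑ i, x i * (k i : ℝ))) (linK k)
    rw [hns, Real.norm_eq_abs,
      abs_of_nonneg (mul_nonneg (hμ k) (Real.exp_pos _).le)]
    have hxle : ∑ i, x i * (k i : ℝ) ≤ ∑ i, (θ + (fun _ => δ : Fin n → ℝ)) i * (k i : ℝ) := by
      refine Finset.sum_le_sum fun i _ => ?_
      have : dist (x i) (θ i) ≤ dist x θ := dist_le_pi_dist x θ i
      have hxi : x i ≤ θ i + δ := by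
        rw [Metric.mem_ball] at hx
        have := abs_sub_le_iff.1 (by rw [← Real.dist_eq]; exact this.trans hx.le : |x i - θ i| ≤ δ)
        linarith [this.1]
      have hxi' : x i ≤ (θ + (fun _ => δ : Fin n → ℝ)) i := hxi
      exact mul_le_mul_of_nonneg_right hxi' (k i).cast_nonneg
    calc μ k * Real.exp (∑ i, x i * (k i : ℝ)) * ‖linK k‖
        ≤ μ k * Real.exp (∑ i, (θ + (fun _ => δ : Fin n → ℝ)) i * (k i : ℝ)) * (∑ i, (k i : ℝ)) := by
          refine mul_le_mul ?_ (linK_norm_le k) (norm_nonneg _) ?_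
          · exact mul_le_mul_of_nonneg_left (Real.exp_le_exp.2 hxle) (hμ k)
          · exact mul_nonneg (hμ k) (Real.exp_pos _).le
      _ = bound k := by rw [hbounddef]; ring
  -- each term is differentiable
  have hdiff : ∀ (k : Fin n → ℕ) (x : Fin n → ℝ),
      HasFDerivAt (fun y : Fin n → ℝ => μ k * Real.exp (∑ i, y i * (k i : ℝ)))
        ((μ k * Real.exp (∑ i, x i * (k i : ℝ))) • linK k) x := by
    intro k x
    have hfun : (fun y : Fin n → ℝ => ∑ i, y i * (k i : ℝ)) = ⇑(linK k) := by
      funext y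
      rw [linK_apply]
      exact Finset.sum_congr rfl fun i _ => (mul_comm _ _)
    have hlin : HasFDerivAt (fun y : Fin n → ℝ => ∑ i, y i * (k i : ℝ)) (linK k) x := by
      rw [hfun]; exact (linK k).hasFDerivAt
    have := (hlin.exp).const_mul (μ k)
    rwa [smul_smul] at this
  -- move to the counting measure
  have hint_eq : ∀ x : Fin n → ℝ,
      (∫ k : Fin n → ℕ, μ k * Real.exp (∑ i, x i * (k i : ℝ)) ∂Measure.count) = Zsum μ x := by
    intro x
    by_cases hx : Summable (fun k : Fin n → ℕ => μ k * Real.exp (∑ i, x i * (k i : ℝ)))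
    · have hnorm : (fun k : Fin n → ℕ => ‖μ k * Real.exp (∑ i, x i * (k i : ℝ))‖)
          = fun k => μ k * Real.exp (∑ i, x i * (k i : ℝ)) :=
        funext fun k => Real.norm_of_nonneg (mul_nonneg (hμ k) (Real.exp_pos _).le)
      have hint : Integrable (fun k : Fin n → ℕ => μ k * Real.exp (∑ i, x i * (k i : ℝ)))
          Measure.count := integrable_count_iff.2 (by rw [hnorm]; exact hx)
      rw [integral_countable' hint]
      simp [Zsum, Measure.count_singleton]
    · have hni : ¬ Integrable (fun k : Fin n → ℕ => μ k * Real.exp (∑ i, x i * (k i : ℝ)))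
          Measure.count := by
        intro h
        refine hx ((integrable_count_iff.1 h).congr fun k => ?_)
        exact Real.norm_of_nonneg (mul_nonneg (hμ k) (Real.exp_pos _).le)
      rw [integral_undef hni]
      rw [Zsum, tsum_eq_zero_of_not_summable hx]
  have hF'norm : Summable (fun k : Fin n → ℕ =>
      ‖(μ k * Real.exp (∑ i, θ i * (k i : ℝ))) • linK k‖) :=
    Summable.of_nonneg_of_le (fun k => norm_nonneg _)
      (fun k => hb k θ (Metric.mem_ball_self hδ)) hbound_sum
  have hF'sum : Summable (fun k : Fin n → ℕ =>
      (μ k * Real.exp (∑ i, θ i * (k i : ℝ))) • linK k) := hF'norm.of_norm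
  refine ⟨hF'sum, ?_⟩
  have hF'int : Integrable (fun k : Fin n → ℕ =>
      (μ k * Real.exp (∑ i, θ i * (k i : ℝ))) • linK k) Measure.count :=
    integrable_count_iff.2 hF'norm
  have hmain := hasFDerivAt_integral_of_dominated_of_fderiv_le (𝕜 := ℝ)
    (μ := Measure.count)
    (F := fun (x : Fin n → ℝ) (k : Fin n → ℕ) => μ k * Real.exp (∑ i, x i * (k i : ℝ)))
    (F' := fun (x : Fin n → ℝ) (k : Fin n → ℕ) =>
      (μ k * Real.exp (∑ i, x i * (k i : ℝ))) • linK k)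
    (x₀ := θ) (bound := bound) (Metric.ball_mem_nhds θ hδ)
    (Filter.Eventually.of_forall fun x => (measurable_of_countable _).aestronglyMeasurable)
    (integrable_count_iff.2 (by
      refine ((interior_subset hθ : θ ∈ LaplaceDomain μ).congr fun k => ?_)
      exact (Real.norm_of_nonneg (mul_nonneg (hμ k) (Real.exp_pos _).le)).symm))
    ((measurable_of_countable _).aestronglyMeasurable)
    (Filter.Eventually.of_forall fun k => fun x hx => hb k x hx)
    (integrable_count_iff.2 (hbound_sum.congr fun k =>
      (Real.norm_of_nonneg (mul_nonneg (mul_nonneg (hμ k) (by positivity))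
        (Real.exp_pos _).le)).symm))
    (Filter.Eventually.of_forall fun k => fun x _ => hdiff k x)
  rw [funext hint_eq, integral_countable' hF'int] at hmain
  simpa [Measure.count_singleton] using hmain

lemma Zsum_ge (μ : (Fin n → ℕ) → ℝ) (hμ : ∀ k, 0 ≤ μ k) {θ : Fin n → ℝ}
    (hθ : θ ∈ LaplaceDomain μ) : μ 0 ≤ Zsum μ θ := by
  have h0 : μ 0 * Real.exp (∑ i, θ i * ((0 : Fin n → ℕ) i : ℝ)) = μ 0 := by simp
  have hle := Summable.le_tsum hθ 0 (fun k _ => mul_nonneg (hμ k) (Real.exp_pos _).le)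
  rw [h0] at hle
  exact hle

lemma Zsum_pos (μ : (Fin n → ℕ) → ℝ) (hμ : ∀ k, 0 ≤ μ k) (hμ0 : 0 < μ 0) {θ : Fin n → ℝ}
    (hθ : θ ∈ LaplaceDomain μ) : 0 < Zsum μ θ :=
  lt_of_lt_of_le hμ0 (Zsum_ge μ hμ hθ)

lemma cumulant_deriv (μ : (Fin n → ℕ) → ℝ) (hμ : ∀ k, 0 ≤ μ k) (hμ0 : 0 < μ 0)
    {θ : Fin n → ℝ} (hθ : θ ∈ interior (LaplaceDomain μ)) :
    DifferentiableAt ℝ (cumulant μ) θ ∧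
    ∀ i : Fin n, fderiv ℝ (cumulant μ) θ (Pi.single i 1)
      = (Zsum μ θ)⁻¹ *
        ∑' k : Fin n → ℕ, μ k * Real.exp (∑ j, θ j * (k j : ℝ)) * (k i : ℝ) := by
  obtain ⟨hF'sum, hZ⟩ := hasFDerivAt_Zsum μ hμ hθ
  have hpos : 0 < Zsum μ θ := Zsum_pos μ hμ hμ0 (interior_subset hθ)
  have hlog : HasDerivAt Real.log (Zsum μ θ)⁻¹ (Zsum μ θ) := Real.hasDerivAt_log hpos.ne'
  have hcum : HasFDerivAt (cumulant μ)
      ((Zsum μ θ)⁻¹ •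
        (∑' k : Fin n → ℕ, (μ k * Real.exp (∑ i, θ i * (k i : ℝ))) • linK k)) θ := by
    have h := hlog.comp_hasFDerivAt θ hZ
    exact h
  refine ⟨hcum.differentiableAt, fun i => ?_⟩
  rw [hcum.fderiv]
  have happ := (hF'sum.hasSum.mapL
    (ContinuousLinearMap.apply ℝ ℝ (Pi.single i 1 : Fin n → ℝ))).tsum_eq
  simp only [ContinuousLinearMap.apply_apply] at happ
  rw [ContinuousLinearMap.smul_apply, ← happ, smul_eq_mul]
  congr 1
  refine tsum_congr fun k => ?_
  rw [ContinuousLinearMap.smul_apply, linK_single, smul_eq_mul]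

lemma summable_applied (μ : (Fin n → ℕ) → ℝ) (hμ : ∀ k, 0 ≤ μ k) {θ : Fin n → ℝ}
    (hθ : θ ∈ interior (LaplaceDomain μ)) (i : Fin n) :
    Summable fun k : Fin n → ℕ =>
      μ k * Real.exp (∑ j, θ j * (k j : ℝ)) * (k i : ℝ) := by
  refine Summable.of_nonneg_of_le (fun k => ?_) (fun k => ?_) (summable_weighted μ hμ hθ)
  · exact mul_nonneg (mul_nonneg (hμ k) (Real.exp_pos _).le) (k i).cast_nonneg
  · have hki : (k i : ℝ) ≤ ∑ j, (k j : ℝ) :=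
      Finset.single_le_sum (f := fun j => (k j : ℝ)) (fun j _ => (k j).cast_nonneg) (Finset.mem_univ i)
    calc μ k * Real.exp (∑ j, θ j * (k j : ℝ)) * (k i : ℝ)
        ≤ μ k * Real.exp (∑ j, θ j * (k j : ℝ)) * (∑ j, (k j : ℝ)) :=
          mul_le_mul_of_nonneg_left hki (mul_nonneg (hμ k) (Real.exp_pos _).le)
      _ = μ k * (∑ j, (k j : ℝ)) * Real.exp (∑ j, θ j * (k j : ℝ)) := by ring

lemma fderiv_cumulant_pos (μ : (Fin n → ℕ) → ℝ) (hμ : ∀ k, 0 ≤ μ k) (hμ0 : 0 < μ 0)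
    (hμe : ∀ i : Fin n, 0 < μ (Pi.single i 1))
    {θ : Fin n → ℝ} (hθ : θ ∈ interior (LaplaceDomain μ)) (i : Fin n) :
    0 < fderiv ℝ (cumulant μ) θ (Pi.single i 1) := by
  rw [(cumulant_deriv μ hμ hμ0 hθ).2 i]
  have hpos : 0 < Zsum μ θ := Zsum_pos μ hμ hμ0 (interior_subset hθ)
  refine mul_pos (inv_pos.2 hpos) ?_
  have hterm : 0 < μ (Pi.single i 1) *
      Real.exp (∑ j, θ j * ((Pi.single i 1 : Fin n → ℕ) j : ℝ)) *
      ((Pi.single i 1 : Fin n → ℕ) i : ℝ) := by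
    have h1 : ((Pi.single i 1 : Fin n → ℕ) i : ℝ) = 1 := by simp
    rw [h1, mul_one]
    exact mul_pos (hμe i) (Real.exp_pos _)
  refine lt_of_lt_of_le hterm (Summable.le_tsum (summable_applied μ hμ hθ i) _ fun k _ => ?_)
  exact mul_nonneg (mul_nonneg (hμ k) (Real.exp_pos _).le) (k i).cast_nonneg

lemma fderiv_cumulant_decay (μ : (Fin n → ℕ) → ℝ) (hμ : ∀ k, 0 ≤ μ k) (hμ0 : 0 < μ 0)
    {θ₀ : Fin n → ℝ} (hθ₀ : θ₀ ∈ interior (LaplaceDomain μ)) {t : ℝ} (ht : 0 ≤ t) (i : Fin n) :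
    0 ≤ fderiv ℝ (cumulant μ) (θ₀ - fun _ => t) (Pi.single i 1) ∧
    fderiv ℝ (cumulant μ) (θ₀ - fun _ => t) (Pi.single i 1)
      ≤ (μ 0)⁻¹ * (Real.exp (-t) *
          ∑' k : Fin n → ℕ, μ k * (∑ j, (k j : ℝ)) * Real.exp (∑ j, θ₀ j * (k j : ℝ))) := by
  have hθt : (θ₀ - fun _ => t) ∈ interior (LaplaceDomain μ) :=
    interior_sub_const μ hμ hθ₀ ht
  rw [(cumulant_deriv μ hμ hμ0 hθt).2 i]
  have hZpos : 0 < Zsum μ (θ₀ - fun _ => t) := Zsum_pos μ hμ hμ0 (interior_subset hθt)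
  have hNnn : 0 ≤ ∑' k : Fin n → ℕ,
      μ k * Real.exp (∑ j, (θ₀ - fun _ => t : Fin n → ℝ) j * (k j : ℝ)) * (k i : ℝ) :=
    tsum_nonneg fun k =>
      mul_nonneg (mul_nonneg (hμ k) (Real.exp_pos _).le) (k i).cast_nonneg
  constructor
  · exact mul_nonneg (inv_nonneg.2 hZpos.le) hNnn
  · have htermwise : ∀ k : Fin n → ℕ,
        μ k * Real.exp (∑ j, (θ₀ - fun _ => t : Fin n → ℝ) j * (k j : ℝ)) * (k i : ℝ)
          ≤ Real.exp (-t) * (μ k * (∑ j, (k j : ℝ)) * Real.exp (∑ j, θ₀ j * (k j : ℝ))) := by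
      intro k
      have hexp : ∑ j, (θ₀ - fun _ => t : Fin n → ℝ) j * (k j : ℝ)
          = (∑ j, θ₀ j * (k j : ℝ)) - t * ∑ j, (k j : ℝ) := by
        simp only [Pi.sub_apply]
        rw [Finset.mul_sum, ← Finset.sum_sub_distrib]
        exact Finset.sum_congr rfl fun j _ => by ring
      rw [hexp, Real.exp_sub]
      by_cases hki : k i = 0
      · rw [hki]
        simp only [Nat.cast_zero, mul_zero]
        have : 0 ≤ Real.exp (-t) *
            (μ k * (∑ j, (k j : ℝ)) * Real.exp (∑ j, θ₀ j * (k j : ℝ))) := by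
          refine mul_nonneg (Real.exp_pos _).le
            (mul_nonneg (mul_nonneg (hμ k) ?_) (Real.exp_pos _).le)
          exact Finset.sum_nonneg fun j _ => (k j).cast_nonneg
        linarith
      · have h1 : (1 : ℝ) ≤ ∑ j, (k j : ℝ) := by
          have : (k i : ℝ) ≤ ∑ j, (k j : ℝ) :=
            Finset.single_le_sum (f := fun j => (k j : ℝ)) (fun j _ => (k j).cast_nonneg) (Finset.mem_univ i)
          have h2 : (1 : ℝ) ≤ (k i : ℝ) := by
            exact_mod_cast Nat.one_le_iff_ne_zero.2 hki
          linarith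
        have hki' : (k i : ℝ) ≤ ∑ j, (k j : ℝ) :=
          Finset.single_le_sum (f := fun j => (k j : ℝ)) (fun j _ => (k j).cast_nonneg) (Finset.mem_univ i)
        have hE : 0 < Real.exp (∑ j, θ₀ j * (k j : ℝ)) := Real.exp_pos _
        have hinner : Real.exp (∑ j, θ₀ j * (k j : ℝ)) /
              Real.exp (t * ∑ j, (k j : ℝ)) * (k i : ℝ)
            ≤ Real.exp (-t) * (Real.exp (∑ j, θ₀ j * (k j : ℝ)) * (∑ j, (k j : ℝ))) := by
          rw [div_eq_mul_inv, ← Real.exp_neg]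
          have ha : Real.exp (-(t * ∑ j, (k j : ℝ))) ≤ Real.exp (-t) :=
            Real.exp_le_exp.2 (by nlinarith)
          calc Real.exp (∑ j, θ₀ j * (k j : ℝ)) * Real.exp (-(t * ∑ j, (k j : ℝ))) * (k i : ℝ)
              ≤ Real.exp (∑ j, θ₀ j * (k j : ℝ)) * (Real.exp (-t) * (∑ j, (k j : ℝ))) := by
                rw [mul_assoc]
                refine mul_le_mul_of_nonneg_left ?_ hE.le
                exact mul_le_mul ha hki' (k i).cast_nonneg (Real.exp_pos _).le
            _ = Real.exp (-t) * (Real.exp (∑ j, θ₀ j * (k j : ℝ)) * (∑ j, (k j : ℝ))) := by ring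
        calc μ k * (Real.exp (∑ j, θ₀ j * (k j : ℝ)) / Real.exp (t * ∑ j, (k j : ℝ))) * (k i : ℝ)
            = μ k * (Real.exp (∑ j, θ₀ j * (k j : ℝ)) /
                Real.exp (t * ∑ j, (k j : ℝ)) * (k i : ℝ)) := by ring
          _ ≤ μ k * (Real.exp (-t) * (Real.exp (∑ j, θ₀ j * (k j : ℝ)) * (∑ j, (k j : ℝ)))) :=
              mul_le_mul_of_nonneg_left hinner (hμ k)
          _ = Real.exp (-t) * (μ k * (∑ j, (k j : ℝ)) * Real.exp (∑ j, θ₀ j * (k j : ℝ))) := by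
              ring
    have hRHSsum : Summable fun k : Fin n → ℕ =>
        Real.exp (-t) * (μ k * (∑ j, (k j : ℝ)) * Real.exp (∑ j, θ₀ j * (k j : ℝ))) :=
      (summable_weighted μ hμ hθ₀).mul_left _
    have hN : (∑' k : Fin n → ℕ,
        μ k * Real.exp (∑ j, (θ₀ - fun _ => t : Fin n → ℝ) j * (k j : ℝ)) * (k i : ℝ))
        ≤ Real.exp (-t) *
          ∑' k : Fin n → ℕ, μ k * (∑ j, (k j : ℝ)) * Real.exp (∑ j, θ₀ j * (k j : ℝ)) := by
      rw [← tsum_mul_left]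
      exact Summable.tsum_le_tsum htermwise (summable_applied μ hμ hθt i) hRHSsum
    have hZinv : (Zsum μ (θ₀ - fun _ => t))⁻¹ ≤ (μ 0)⁻¹ := by
      refine inv_anti₀ hμ0 ?_
      exact Zsum_ge μ hμ (interior_subset hθt)
    refine mul_le_mul hZinv hN hNnn (inv_nonneg.2 hμ0.le)
/-- **Proposition 6.3, part 1.** For a measure `μ = Σ_{k∈ℕⁿ} μ_k δ_k` with `μ₀ > 0` and
`μ_{e_i} > 0`, whose Laplace transform has a nonempty open domain of finiteness: the cumulant
function is differentiable on the interior of the domain, every coordinate of its gradient is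
positive there (so the domain of the means is contained in `(0,∞)ⁿ`), and `0` is in the closure
of the domain of the means. -/
theorem domain_of_means_of_NEF_on_Nn {n : ℕ} (hn : 1 ≤ n)
    (μ : (Fin n → ℕ) → ℝ)
    (hμnonneg : ∀ k, 0 ≤ μ k)
    (hμ0 : 0 < μ 0)
    (hμe : ∀ i : Fin n, 0 < μ (Pi.single i 1))
    (hΘ : (interior (LaplaceDomain μ)).Nonempty) :
    (∀ θ ∈ interior (LaplaceDomain μ),
      DifferentiableAt ℝ (cumulant μ) θ ∧
      ∀ i : Fin n, 0 < fderiv ℝ (cumulant μ) θ (Pi.single i 1)) ∧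
    (0 : Fin n → ℝ) ∈
      closure ((fun θ => fun i : Fin n => fderiv ℝ (cumulant μ) θ (Pi.single i 1)) ''
        interior (LaplaceDomain μ)) := by
  obtain ⟨θ₀, hθ₀⟩ := hΘ
  refine ⟨fun θ hθ => ⟨(cumulant_deriv μ hμnonneg hμ0 hθ).1,
    fun i => fderiv_cumulant_pos μ hμnonneg hμ0 hμe hθ i⟩, ?_⟩
  rw [Metric.mem_closure_iff]
  intro ε hε
  set C : ℝ := ∑' k : Fin n → ℕ, μ k * (∑ j, (k j : ℝ)) * Real.exp (∑ j, θ₀ j * (k j : ℝ))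
    with hCdef
  have hC0 : 0 ≤ C :=
    tsum_nonneg fun k => mul_nonneg (mul_nonneg (hμnonneg k)
      (Finset.sum_nonneg fun j _ => (k j).cast_nonneg)) (Real.exp_pos _).le
  set A : ℝ := (μ 0)⁻¹ * C with hAdef
  have hA0 : 0 ≤ A := mul_nonneg (inv_nonneg.2 hμ0.le) hC0
  set t : ℝ := max 0 (Real.log (A / ε) + 1) with htdef
  have ht0 : 0 ≤ t := le_max_left _ _
  have hθt : (θ₀ - fun _ => t) ∈ interior (LaplaceDomain μ) :=
    interior_sub_const μ hμnonneg hθ₀ ht0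
  have hbd : Real.exp (-t) * A < ε := by
    rcases eq_or_lt_of_le hA0 with h0 | hApos
    · rw [← h0, mul_zero]
      exact hε
    · have h1 : Real.log (A / ε) + 1 ≤ t := le_max_right _ _
      have h2 : Real.exp (-t) ≤ Real.exp (-(Real.log (A / ε) + 1)) :=
        Real.exp_le_exp.2 (by linarith)
      have h3 : Real.exp (-(Real.log (A / ε) + 1)) = ε / A * Real.exp (-1) := by
        rw [neg_add, Real.exp_add, Real.exp_neg, Real.exp_log (by positivity)]
        rw [inv_div]
      have h4 : Real.exp (-t) * A ≤ ε * Real.exp (-1) := by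
        calc Real.exp (-t) * A ≤ ε / A * Real.exp (-1) * A := by
              refine mul_le_mul_of_nonneg_right ?_ hA0
              rw [← h3]; exact h2
          _ = ε * Real.exp (-1) := by field_simp
      have h5 : Real.exp (-1) < 1 := by
        rw [show (1 : ℝ) = Real.exp 0 by rw [Real.exp_zero]]
        exact Real.exp_lt_exp.2 (by norm_num)
      nlinarith [Real.exp_pos (-1 : ℝ)]
  refine ⟨_, Set.mem_image_of_mem _ hθt, ?_⟩
  rw [dist_pi_lt_iff hε]
  intro i
  obtain ⟨hnn, hle⟩ := fderiv_cumulant_decay μ hμnonneg hμ0 hθ₀ ht0 i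
  have hlt : fderiv ℝ (cumulant μ) (θ₀ - fun _ => t) (Pi.single i 1) < ε := by
    have : (μ 0)⁻¹ * (Real.exp (-t) * C) = Real.exp (-t) * A := by rw [hAdef]; ring
    calc fderiv ℝ (cumulant μ) (θ₀ - fun _ => t) (Pi.single i 1)
        ≤ (μ 0)⁻¹ * (Real.exp (-t) * C) := hle
      _ = Real.exp (-t) * A := this
      _ < ε := hbd
  have h0i : (0 : Fin n → ℝ) i = 0 := rfl
  rw [h0i, Real.dist_eq]
  rw [abs_sub_comm, sub_zero, abs_of_nonneg hnn]
  exact hlt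
end
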